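/- Let E be partitioned into z ≥ 2 consecutive equal subintervals I(1),…,I(z), let X be a finite set with M elements, and suppose the balance condition ||I(s) ∩ X| − |E ∩ X|/z| < δM/(z·L) holds for all s, where L is such that each I(s) has X-count expectation |E∩X|/z. If additionally for two such equal-length intervals E', E'' one has |E' ∩ X| − |E'' ∩ X| ≥ (3δM)/L with E' the left neighbor of E'', then the shifted interval I° consisting of the last subinterval of E' together with the first z−1 subintervals of E'' fails δ-balance: there exists s ∈ {1,…,z} with ||I°(s) ∩ X| − |I° ∩ X|/z| > δM/(zL), where I°(1),…,I°(z) are the z consecutive pieces of I°. -/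

import Mathlib

open scoped Classical

/-- Number of points of `X` in the interval `[c, d)`, as a real number. -/
noncomputable def cntIco (X : Finset ℝ) (c d : ℝ) : ℝ :=
  ((X.filter fun x => x ∈ Set.Ico c d).card : ℝ)

lemma cntIco_add (X : Finset ℝ) {c d e : ℝ} (h1 : c ≤ d) (h2 : d ≤ e) :
    cntIco X c d + cntIco X d e = cntIco X c e := by
  unfold cntIco
  rw [← Nat.cast_add]
  congr 1
  rw [← Finset.card_union_of_disjoint]
  · congr 1
    rw [← Finset.filter_or]
    apply Finset.filter_congr
    intro x _
    simp only [← Set.mem_union, Set.Ico_union_Ico_eq_Ico h1 h2]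
  · apply Finset.disjoint_filter_filter'
    refine Set.disjoint_left.mpr ?_
    intro x hx hx'
    exact absurd hx'.1 (not_le.2 hx.2)

set_option maxHeartbeats 800000 in
theorem stmt15 (z M : ℕ) (hz : 4 ≤ z) (δ a L : ℝ) (hδ0 : 0 < δ) (hδ1 : δ < 1)
    (hL : 0 < L) (X : Finset ℝ) (hM : X.card = M)
    (hbal' : ∀ s ∈ Finset.Icc 1 z,
      |cntIco X (a + ((s : ℝ) - 1) / (z * L)) (a + (s : ℝ) / (z * L)) -
          cntIco X a (a + 1 / L) / z| < δ * M / (z * L))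
    (hbal'' : ∀ s ∈ Finset.Icc 1 z,
      |cntIco X (a + ((z : ℝ) + (s : ℝ) - 1) / (z * L)) (a + ((z : ℝ) + (s : ℝ)) / (z * L)) -
          cntIco X (a + 1 / L) (a + 2 / L) / z| < δ * M / (z * L))
    (hdiff : cntIco X a (a + 1 / L) - cntIco X (a + 1 / L) (a + 2 / L) ≥ 3 * δ * M / L) :
    ∃ s ∈ Finset.Icc 1 z,
      |cntIco X (a + ((z : ℝ) - 2 + (s : ℝ)) / (z * L)) (a + ((z : ℝ) - 1 + (s : ℝ)) / (z * L)) -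
          cntIco X (a + ((z : ℝ) - 1) / (z * L)) (a + ((z : ℝ) - 1) / (z * L) + 1 / L) / z|
        > δ * M / (z * L) := by
  have hz1 : 1 ≤ z := by omega
  have hzr : (4:ℝ) ≤ (z:ℝ) := by exact_mod_cast hz
  have hz0 : (0:ℝ) < (z:ℝ) := by linarith
  have hmem : (z : ℕ) ∈ Finset.Icc 1 z := by simp [hz1]
  set ε := δ * ↑M / (↑z * L) with hedef
  have hε : 0 < ε := lt_of_le_of_lt (abs_nonneg _) (hbal' 1 (Finset.mem_Icc.mpr ⟨le_refl 1, hz1⟩))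
  set A := cntIco X a (a + 1 / L) with hA
  set B := cntIco X (a + 1 / L) (a + 2 / L) with hB
  -- endpoint identities
  have e1 : a + (z:ℝ) / (z * L) = a + 1 / L := by
    field_simp
  have e2 : a + ((z:ℝ) + (z:ℝ)) / (z * L) = a + 2 / L := by
    field_simp; ring
  have hP := hbal' z hmem
  rw [e1] at hP
  set P := cntIco X (a + ((z:ℝ) - 1) / (z * L)) (a + 1 / L) with hPdef
  have hQ := hbal'' z hmem
  rw [e2] at hQ
  set Q := cntIco X (a + ((z:ℝ) + (z:ℝ) - 1) / (z * L)) (a + 2 / L) with hQdef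
  -- decompose C and B
  have ord1 : a + ((z:ℝ) - 1) / (z * L) ≤ a + 1 / L := by
    have : ((z:ℝ) - 1) / (z * L) ≤ 1 / L := by
      rw [div_le_div_iff₀ (by positivity) hL]
      nlinarith
    linarith
  have ord2 : a + 1 / L ≤ a + ((z:ℝ) + (z:ℝ) - 1) / (z * L) := by
    have : 1 / L ≤ ((z:ℝ) + (z:ℝ) - 1) / (z * L) := by
      rw [div_le_div_iff₀ hL (by positivity)]
      nlinarith
    linarith
  have ord3 : a + ((z:ℝ) + (z:ℝ) - 1) / (z * L) ≤ a + 2 / L := by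
    have : ((z:ℝ) + (z:ℝ) - 1) / (z * L) ≤ 2 / L := by
      rw [div_le_div_iff₀ (by positivity) hL]
      nlinarith
    linarith
  have e3 : a + ((z:ℝ) - 1) / (z * L) + 1 / L = a + ((z:ℝ) + (z:ℝ) - 1) / (z * L) := by
    field_simp; ring
  set C := cntIco X (a + ((z:ℝ) - 1) / (z * L)) (a + ((z:ℝ) - 1) / (z * L) + 1 / L) with hCdef
  have hCsplit : P + cntIco X (a + 1 / L) (a + ((z:ℝ) + (z:ℝ) - 1) / (z * L)) = C := by
    rw [hCdef, e3]
    exact cntIco_add X ord1 ord2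
  have hBsplit : cntIco X (a + 1 / L) (a + ((z:ℝ) + (z:ℝ) - 1) / (z * L)) + Q = B := by
    exact cntIco_add X ord2 ord3
  have hC : C = P + B - Q := by linarith
  -- witness s = 1
  refine ⟨1, by simp [hz1], ?_⟩
  have e4 : (z:ℝ) - 2 + (1:ℕ) = (z:ℝ) - 1 := by push_cast; ring
  have e5 : (z:ℝ) - 1 + (1:ℕ) = (z:ℝ) := by push_cast; ring
  rw [e4, e5, e1]
  have hdiff' : A - B ≥ 3 * (z:ℝ) * ε := by
    have : 3 * (z:ℝ) * ε = 3 * δ * ↑M / L := by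
      rw [hedef]; field_simp
    linarith [this ▸ hdiff]
  have hP1 : P > A / z - ε := by have := abs_lt.1 hP; linarith
  have hQ1 : Q > B / z - ε := by have := abs_lt.1 hQ; linarith
  have key : P - C / z > ε := by
    rw [hC]
    rw [gt_iff_lt, ← sub_pos]
    have expand : P - (P + B - Q) / ↑z - ε = (((z:ℝ) - 1) * P - B + Q - ε * ↑z) / ↑z := by
      field_simp; ring
    rw [expand]
    apply div_pos _ hz0
    have m1 : ((z:ℝ) - 1) * (A / ↑z - ε) < ((z:ℝ) - 1) * P :=
      mul_lt_mul_of_pos_left hP1 (by linarith)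
    have m2 : ((z:ℝ) - 1) * (A / ↑z) - B + B / ↑z = ((z:ℝ) - 1) * (A - B) / ↑z := by
      field_simp
      ring
    have m3 : ((z:ℝ) - 1) * (A - B) / ↑z ≥ 3 * ((z:ℝ) - 1) * ε := by
      rw [ge_iff_le, le_div_iff₀ hz0]
      have h := mul_le_mul_of_nonneg_left hdiff' (show (0:ℝ) ≤ (z:ℝ) - 1 by linarith)
      have h2 : 3 * ((z:ℝ) - 1) * ε * (z:ℝ) = ((z:ℝ) - 1) * (3 * (z:ℝ) * ε) := by ring
      rw [h2]
      exact h
    nlinarith [m1, m2, m3, hQ1, hzr, hε, mul_pos (show (0:ℝ) < (z:ℝ) - 1 by linarith) hε]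
  calc ε < P - C / z := key
    _ ≤ |P - C / z| := le_abs_self _
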